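/- Fix C > 0. If (w*, b*, u*) is a P-stationary point with some parameter γ > 0 of the problem min (1/2)‖w‖² + C‖u_+‖₀ subject to u + Aw + b y = 1, then (w*, b*, u*) is a local minimizer of this problem; that is, there is a neighborhood N of (w*, b*, u*) such that (1/2)‖w*‖² + C‖u*_+‖₀ ≤ (1/2)‖w‖² + C‖u_+‖₀ for all (w, b, u) ∈ N satisfying u + Aw + b y = 1. -/

import Mathlib

open Finset

noncomputable def l01norm {m : ℕ} (v : Fin m → ℝ) : ℕ :=
  (Finset.univ.filter fun i => 0 < v i).card

/-- `(w, b, u)` is a P-stationary point with parameter `γ > 0` and multiplier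
`lam` of the problem `min (1/2)‖w‖² + C‖u₊‖₀ s.t. u + Aw + by = 1`. -/
def IsPStationary {m n : ℕ} (A : Matrix (Fin m) (Fin n) ℝ) (y : Fin m → ℝ)
    (C γ : ℝ) (w : Fin n → ℝ) (b : ℝ) (u : Fin m → ℝ) (lam : Fin m → ℝ) : Prop :=
  (∀ j, w j + ∑ i, A i j * lam i = 0) ∧
  (∑ i, y i * lam i = 0) ∧
  (∀ i, u i + A.mulVec w i + b * y i = 1) ∧
  (∀ i, (0 < u i - γ * lam i ∧ u i - γ * lam i ≤ Real.sqrt (2 * γ * C)) →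
      u i = 0) ∧
  (∀ i, ¬(0 < u i - γ * lam i ∧ u i - γ * lam i ≤ Real.sqrt (2 * γ * C)) →
      u i = u i - γ * lam i)

lemma C_mul_l01 {m : ℕ} (C : ℝ) (v : Fin m → ℝ) :
    C * (l01norm v : ℝ) = ∑ i, if 0 < v i then C else 0 := by
  rw [l01norm, ← Finset.sum_filter, Finset.sum_const, nsmul_eq_mul, mul_comm]

/-- any P-stationary point (with some parameter `γ > 0`) of the
`L_{0/1}`-SVM problem is a local minimizer of that constrained problem. -/
theorem PStationary_is_local_min {m n : ℕ}
    (x : Fin m → Fin n → ℝ) (y : Fin m → ℝ) (hy : ∀ i, y i = 1 ∨ y i = -1)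
    (A : Matrix (Fin m) (Fin n) ℝ) (hA : ∀ i j, A i j = y i * x i j)
    (C : ℝ) (hC : 0 < C) (γ : ℝ) (hγ : 0 < γ)
    (wstar : Fin n → ℝ) (bstar : ℝ) (ustar : Fin m → ℝ) (lam : Fin m → ℝ)
    (hstat : IsPStationary A y C γ wstar bstar ustar lam) :
    IsLocalMinOn
      (fun p : (Fin n → ℝ) × ℝ × (Fin m → ℝ) =>
        (1 / 2) * (∑ j, (p.1 j) ^ 2) + C * (l01norm p.2.2 : ℝ))
      {p : (Fin n → ℝ) × ℝ × (Fin m → ℝ) |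
        ∀ i, p.2.2 i + A.mulVec p.1 i + p.2.1 * y i = 1}
      (wstar, bstar, ustar) := by
  obtain ⟨h1, h2, h3, h4, h5⟩ := hstat
  set t : ℝ := Real.sqrt (γ * C / 2) with ht
  have htpos : 0 < t := Real.sqrt_pos.mpr (by positivity)
  have hst : Real.sqrt (2 * γ * C) * t = γ * C := by
    rw [ht, ← Real.sqrt_mul (by positivity),
      show (2 * γ * C) * (γ * C / 2) = (γ * C) ^ 2 by ring,
      Real.sqrt_sq (by positivity)]
  set δ : Fin m → ℝ := fun i => if 0 < ustar i then min t (ustar i) else t with hδdef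
  have hδpos : ∀ i, 0 < δ i := by
    intro i; simp only [hδdef]
    split
    · exact lt_min htpos ‹_›
    · exact htpos
  have hnear : ∀ᶠ p : (Fin n → ℝ) × ℝ × (Fin m → ℝ) in nhds (wstar, bstar, ustar),
      ∀ i, |p.2.2 i - ustar i| < δ i := by
    rw [Filter.eventually_all]
    intro i
    have hc : Continuous (fun p : (Fin n → ℝ) × ℝ × (Fin m → ℝ) => p.2.2 i) :=
      (continuous_apply i).comp (continuous_snd.comp continuous_snd)
    have hball : ∀ᶠ z in nhds (ustar i), |z - ustar i| < δ i := by
      filter_upwards [Metric.ball_mem_nhds (ustar i) (hδpos i)] with z hz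
      simpa [Real.dist_eq] using hz
    exact (hc.tendsto (wstar, bstar, ustar)).eventually hball
  show ∀ᶠ p in nhdsWithin (wstar, bstar, ustar)
      {p : (Fin n → ℝ) × ℝ × (Fin m → ℝ) |
        ∀ i, p.2.2 i + A.mulVec p.1 i + p.2.1 * y i = 1}, _ ≤ _
  filter_upwards [nhdsWithin_le_nhds hnear, self_mem_nhdsWithin] with p hpnear hpfeas
  obtain ⟨w, b, u⟩ := p
  simp only [Set.mem_setOf_eq] at hpfeas
  simp only at hpnear ⊢
  -- multiplier vanishes off the prox-active set
  have hlam0 : ∀ i, ¬(0 < ustar i - γ * lam i ∧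
      ustar i - γ * lam i ≤ Real.sqrt (2 * γ * C)) → lam i = 0 := by
    intro i hi
    have h := h5 i hi
    have hz : γ * lam i = 0 := by linarith
    rcases mul_eq_zero.mp hz with h' | h'
    · exact absurd h' (ne_of_gt hγ)
    · exact h'
  -- gradient inequality for the quadratic part
  have hquad : ∑ j, wstar j * (w j - wstar j) ≤
      (1 / 2) * ∑ j, (w j) ^ 2 - (1 / 2) * ∑ j, (wstar j) ^ 2 := by
    have h := Finset.sum_le_sum (fun j (_ : j ∈ Finset.univ) =>
      (by nlinarith [sq_nonneg (w j - wstar j)] :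
        wstar j * (w j - wstar j) ≤ (1 / 2) * (w j) ^ 2 - (1 / 2) * (wstar j) ^ 2))
    calc ∑ j, wstar j * (w j - wstar j)
        ≤ ∑ j, ((1 / 2) * (w j) ^ 2 - (1 / 2) * (wstar j) ^ 2) := h
      _ = (1 / 2) * ∑ j, (w j) ^ 2 - (1 / 2) * ∑ j, (wstar j) ^ 2 := by
          rw [Finset.sum_sub_distrib, Finset.mul_sum, Finset.mul_sum]
  -- rewrite the gradient term using stationarity and feasibility
  have hmv : ∀ i, A.mulVec w i - A.mulVec wstar i = (ustar i - u i) + (bstar - b) * y i := by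
    intro i
    have h0 := hpfeas i
    have h0' := h3 i
    linarith
  have hstep1 : ∑ j, wstar j * (w j - wstar j) = ∑ i, lam i * (u i - ustar i) := by
    have e1 : ∀ j, wstar j = -∑ i, A i j * lam i := fun j => by have := h1 j; linarith
    calc ∑ j, wstar j * (w j - wstar j)
        = ∑ j, ∑ i, -(lam i * (A i j * (w j - wstar j))) := by
          refine Finset.sum_congr rfl fun j _ => ?_
          rw [e1 j, neg_mul, Finset.sum_mul, ← Finset.sum_neg_distrib]
          exact Finset.sum_congr rfl fun i _ => by ring
      _ = ∑ i, ∑ j, -(lam i * (A i j * (w j - wstar j))) := Finset.sum_comm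
      _ = ∑ i, -(lam i * (A.mulVec w i - A.mulVec wstar i)) := by
          refine Finset.sum_congr rfl fun i _ => ?_
          rw [Finset.sum_neg_distrib]
          congr 1
          rw [Matrix.mulVec, Matrix.mulVec, dotProduct, dotProduct, ← Finset.sum_sub_distrib,
            Finset.mul_sum]
          exact Finset.sum_congr rfl fun j _ => by ring
      _ = ∑ i, (lam i * (u i - ustar i) - (bstar - b) * (y i * lam i)) := by
          refine Finset.sum_congr rfl fun i _ => ?_
          rw [hmv i]; ring
      _ = ∑ i, lam i * (u i - ustar i) := by
          rw [Finset.sum_sub_distrib, ← Finset.mul_sum, h2, mul_zero, sub_zero]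
  -- per-index inequality for the counting part
  have hkey : ∀ i ∈ Finset.univ, (0:ℝ) ≤ ((if 0 < u i then C else 0) - (if 0 < ustar i then C else 0))
      + lam i * (u i - ustar i) := by
    intro i _
    have hnr := hpnear i
    by_cases hP : (0 < ustar i - γ * lam i ∧ ustar i - γ * lam i ≤ Real.sqrt (2 * γ * C))
    · -- prox case : ustar i = 0, lam i < 0 with bounded magnitude
      have hu0 : ustar i = 0 := h4 i hP
      obtain ⟨hP1, hP2⟩ := hP
      rw [hu0] at hP1 hP2
      rw [hu0] at hnr ⊢
      simp only [lt_self_iff_false, if_false, sub_zero] at hnr ⊢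
      have hδi : δ i = t := by simp [hδdef, hu0]
      rw [hδi] at hnr
      by_cases hu : 0 < u i
      · rw [if_pos hu]
        have h1' : u i < t := lt_of_le_of_lt (le_abs_self _) hnr
        have hb1 : (-(γ * lam i)) * u i ≤ Real.sqrt (2 * γ * C) * u i :=
          mul_le_mul_of_nonneg_right (by linarith) (le_of_lt hu)
        have hb2 : Real.sqrt (2 * γ * C) * u i ≤ Real.sqrt (2 * γ * C) * t :=
          mul_le_mul_of_nonneg_left (le_of_lt h1') (by positivity)
        have hb3 : γ * (-(lam i * u i)) ≤ γ * C := by nlinarith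
        have hb4 : -(lam i * u i) ≤ C := le_of_mul_le_mul_left hb3 hγ
        linarith
      · rw [if_neg hu]
        push_neg at hu
        have hlamneg : lam i < 0 := by nlinarith
        nlinarith
    · -- non-prox case : lam i = 0
      have hl := hlam0 i hP
      rw [hl, zero_mul, add_zero, sub_nonneg]
      by_cases hu : 0 < ustar i
      · rw [if_pos hu]
        have hδi : δ i ≤ ustar i := by
          rw [hδdef]; simp only [if_pos hu]; exact min_le_right _ _
        have : ustar i - u i < δ i := lt_of_le_of_lt (by
          have := neg_abs_le (u i - ustar i); linarith) hnr
        have hupos : 0 < u i := by linarith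
        rw [if_pos hupos]
      · rw [if_neg hu]
        split
        · exact le_of_lt hC
        · exact le_refl 0
  -- combine
  have hsum : (0:ℝ) ≤ (∑ i, if 0 < u i then C else 0) - (∑ i, if 0 < ustar i then C else 0)
      + ∑ i, lam i * (u i - ustar i) := by
    have h := Finset.sum_nonneg hkey
    rw [Finset.sum_add_distrib, Finset.sum_sub_distrib] at h
    linarith
  rw [← C_mul_l01, ← C_mul_l01] at hsum
  have := hquad
  rw [hstep1] at this
  linarith
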